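/- Let λ be a nonzero real number, F a real number, and p, q, r, v₁, v₂, v : ℝ → ℝ smooth functions with 2r(x) − λ ≠ 0 for all x. Set S := [[p,q],[r,−p]] and V := [[v₁, v₂],[v, −v₁]], and assume −λV′ + [V, S − λA] = 0 on ℝ and v₁² + v₂·v = F identically. Then v satisfies (2r − λ)³·F − λ²(2r − λ)(v′)² + 2λ²(2r − λ)v′′v − 4r′λ²·v′v + v²·(λ³ + 2λ²(2p′ − q − 2r) + 4λ(−2p′r + 2r′p + p² + 2qr + r²) − 8r(p² + qr)) = 0 identically on ℝ. -/

import Mathlib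

open Matrix

/-- The constant matrix `A = (1/2)·[[0,1],[1,0]]`. -/
noncomputable def A : Matrix (Fin 2) (Fin 2) ℝ := (1/2 : ℝ) • !![0, 1; 1, 0]

/-- Entrywise derivative of a matrix-valued function on `ℝ`. -/
noncomputable def mderiv (f : ℝ → Matrix (Fin 2) (Fin 2) ℝ) (x : ℝ) :
    Matrix (Fin 2) (Fin 2) ℝ :=
  Matrix.of fun i j => deriv (fun t => f t i j) x

theorem equation_for_v (lam : ℝ) (hlam : lam ≠ 0) (F : ℝ)
    (p q r v₁ v₂ v : ℝ → ℝ)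
    (hp : ContDiff ℝ (⊤ : ℕ∞) p) (hq : ContDiff ℝ (⊤ : ℕ∞) q)
    (hr : ContDiff ℝ (⊤ : ℕ∞) r) (hv₁ : ContDiff ℝ (⊤ : ℕ∞) v₁)
    (hv₂ : ContDiff ℝ (⊤ : ℕ∞) v₂) (hv : ContDiff ℝ (⊤ : ℕ∞) v)
    (hden : ∀ x, 2 * r x - lam ≠ 0)
    (S V : ℝ → Matrix (Fin 2) (Fin 2) ℝ)
    (hS : S = fun x => !![p x, q x; r x, -p x])
    (hV : V = fun x => !![v₁ x, v₂ x; v x, -v₁ x])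
    (hLax : ∀ x : ℝ,
      (-lam) • mderiv V x + (V x * (S x - lam • A) - (S x - lam • A) * V x) = 0)
    (hF : ∀ x, v₁ x ^ 2 + v₂ x * v x = F) :
    ∀ x : ℝ,
      (2 * r x - lam) ^ 3 * F
        - lam ^ 2 * (2 * r x - lam) * (deriv v x) ^ 2
        + 2 * lam ^ 2 * (2 * r x - lam) * deriv (deriv v) x * v x
        - 4 * deriv r x * lam ^ 2 * deriv v x * v x
        + (v x) ^ 2 * (lam ^ 3
            + 2 * lam ^ 2 * (2 * deriv p x - q x - 2 * r x)
            + 4 * lam * (-2 * deriv p x * r x + 2 * deriv r x * p x + (p x) ^ 2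
                + 2 * q x * r x + (r x) ^ 2)
            - 8 * r x * ((p x) ^ 2 + q x * r x)) = 0 := by
  subst hS hV
  -- scalar Lax equations
  have h2 : ∀ t : ℝ, lam * deriv v t = 2 * p t * v t - (2 * r t - lam) * v₁ t := by
    intro t
    have h10 := congrFun (congrFun (hLax t) 1) 0
    simp [mderiv, A, Matrix.mul_apply, Fin.sum_univ_two] at h10
    linarith
  have h1 : ∀ t : ℝ, lam * deriv v₁ t =
      (r t - lam / 2) * v₂ t - (q t - lam / 2) * v t := by
    intro t
    have h00 := congrFun (congrFun (hLax t) 0) 0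
    simp [mderiv, A, Matrix.mul_apply, Fin.sum_univ_two] at h00
    linarith
  intro x
  -- differentiability facts
  have hdv : ContDiff ℝ (⊤ : ℕ∞) (deriv v) := (contDiff_infty_iff_deriv.mp hv).2
  have Hp : HasDerivAt p (deriv p x) x := (hp.differentiable (by simp) x).hasDerivAt
  have Hr : HasDerivAt r (deriv r x) x := (hr.differentiable (by simp) x).hasDerivAt
  have Hv : HasDerivAt v (deriv v x) x := (hv.differentiable (by simp) x).hasDerivAt
  have Hv1 : HasDerivAt v₁ (deriv v₁ x) x := (hv₁.differentiable (by simp) x).hasDerivAt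
  have Hdv : HasDerivAt (deriv v) (deriv (deriv v) x) x :=
    (hdv.differentiable (by simp) x).hasDerivAt
  -- differentiate h2
  have HL : HasDerivAt (fun t => lam * deriv v t) (lam * deriv (deriv v) x) x :=
    Hdv.const_mul lam
  have HR : HasDerivAt (fun t => 2 * p t * v t - (2 * r t - lam) * v₁ t)
      (2 * deriv p x * v x + 2 * p x * deriv v x
        - (2 * deriv r x * v₁ x + (2 * r x - lam) * deriv v₁ x)) x := by
    have h := ((Hp.const_mul 2).mul Hv).sub
      (((Hr.const_mul 2).sub_const lam).mul Hv1)
    exact h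
  have hd : lam * deriv (deriv v) x =
      2 * deriv p x * v x + 2 * p x * deriv v x
        - (2 * deriv r x * v₁ x + (2 * r x - lam) * deriv v₁ x) := by
    have := funext h2
    calc lam * deriv (deriv v) x
        = deriv (fun t => lam * deriv v t) x := HL.deriv.symm
      _ = deriv (fun t => 2 * p t * v t - (2 * r t - lam) * v₁ t) x := by rw [this]
      _ = _ := HR.deriv
  -- second derivative formula with v₁' eliminated
  have h3 : lam ^ 2 * deriv (deriv v) x =
      lam * (2 * deriv p x * v x + 2 * p x * deriv v x - 2 * deriv r x * v₁ x)
        - (2 * r x - lam) * ((r x - lam / 2) * v₂ x - (q x - lam / 2) * v x) := by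
    linear_combination lam * hd - (2 * r x - lam) * h1 x
  have hv'e : deriv v x = (2 * p x * v x - (2 * r x - lam) * v₁ x) / lam := by
    field_simp
    linarith [h2 x]
  have hv''e : deriv (deriv v) x =
      (lam * (2 * deriv p x * v x + 2 * p x * deriv v x - 2 * deriv r x * v₁ x)
        - (2 * r x - lam) * ((r x - lam / 2) * v₂ x - (q x - lam / 2) * v x)) / lam ^ 2 := by
    field_simp
    linarith [h3]
  rw [hv''e, hv'e, ← hF x]
  field_simp
  ring
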